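/- arXiv:math/0506239 — 3 statements merged into one kernel-verified Lean document; each statement's English description precedes it below -/
import Mathlib

section
/- Let 0 < p < 1 and 1 ≤ m ≤ n, and set ρ = (1/p − 1)^{−1}·m^{1/2 − 1/p}. Then for every x ∈ ℝⁿ, sup{ ⟨x,z⟩ : z ∈ B^n_{p,∞} ∩ ρB₂ⁿ } ≤ 2ρ·(Σ_{i=1}^m (x_i*)²)^{1/2}, where (x_i*)_{i=1}^n is the non-increasing rearrangement of (|x_i|)_{i=1}^n. Moreover, with ρ = 1/√m, sup{ ⟨x,z⟩ : z ∈ B₁ⁿ ∩ ρB₂ⁿ } ≤ 2ρ·(Σ_{i=1}^m (x_i*)²)^{1/2}. -/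
open MeasureTheory Real Set
open scoped RealInnerProductSpace Pointwise

noncomputable section

/-- The unit ball of weak-ℓ_p^n: `{x : |{i : |x_i| ≥ s}| ≤ s^{-p}` for all `s > 0}`. -/
def weakLpBall (n : ℕ) (p : ℝ) : Set (EuclideanSpace ℝ (Fin n)) :=
  {x | ∀ s : ℝ, 0 < s →
    ((Finset.univ.filter fun i : Fin n => s ≤ |x i|).card : ℝ) ≤ s ^ (-p)}

/-- The unit ball of ℓ₁ⁿ. -/
def l1Ball (n : ℕ) : Set (EuclideanSpace ℝ (Fin n)) :=
  {x | ∑ i, |x i| ≤ 1}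

lemma card_filter_fin_lt (n m : ℕ) (hmn : m ≤ n) :
    (Finset.univ.filter fun i : Fin n => (i : ℕ) < m).card = m := by
  have h : (Finset.univ.filter fun i : Fin n => (i : ℕ) < m)
      = Finset.univ.map (Fin.castLEEmb hmn) := by
    ext i
    simp only [Finset.mem_filter, Finset.mem_univ, true_and, Finset.mem_map,
      Fin.castLEEmb_apply]
    constructor
    · intro h; exact ⟨⟨i, h⟩, by simp [Fin.castLE]⟩
    · rintro ⟨j, hj, rfl⟩
      simp
  rw [h, Finset.card_map, Finset.card_univ, Fintype.card_fin]

lemma key_lemma (n m : ℕ) (hm : 1 ≤ m) (hmn : m ≤ n)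
    (a b : Fin n → ℝ) (ha0 : ∀ i, 0 ≤ a i) (hb0 : ∀ i, 0 ≤ b i)
    (ha : ∀ i j : Fin n, i ≤ j → a j ≤ a i)
    (ρ : ℝ) (hρ : 0 ≤ ρ)
    (hb2 : ∑ k ∈ Finset.univ.filter fun k : Fin n => (k : ℕ) < m, b k ^ 2 ≤ ρ ^ 2)
    (hb1 : ∑ k ∈ Finset.univ.filter fun k : Fin n => ¬ (k : ℕ) < m, b k ≤ ρ * Real.sqrt m) :
    ∑ k, a k * b k ≤ 2 * ρ *
      Real.sqrt (∑ k ∈ Finset.univ.filter fun k : Fin n => (k : ℕ) < m, a k ^ 2) := by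
  set T := Real.sqrt (∑ k ∈ Finset.univ.filter fun k : Fin n => (k : ℕ) < m, a k ^ 2) with hT
  have hT0 : 0 ≤ T := Real.sqrt_nonneg _
  have hm1 : m - 1 < n := by omega
  set km : Fin n := ⟨m - 1, hm1⟩ with hkm
  have hakm : Real.sqrt m * a km ≤ T := by
    rw [← Real.sqrt_sq (ha0 km), ← Real.sqrt_mul (by positivity)]
    apply Real.sqrt_le_sqrt
    calc (m : ℝ) * a km ^ 2
        = ∑ _k ∈ Finset.univ.filter fun k : Fin n => (k : ℕ) < m, a km ^ 2 := by
          rw [Finset.sum_const, card_filter_fin_lt n m hmn, nsmul_eq_mul]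
      _ ≤ ∑ k ∈ Finset.univ.filter fun k : Fin n => (k : ℕ) < m, a k ^ 2 := by
          refine Finset.sum_le_sum fun k hk => ?_
          have hkv : (k : ℕ) < m := (Finset.mem_filter.1 hk).2
          have hk' : k ≤ km := by
            rw [Fin.le_def]; simp only [hkm]; omega
          exact pow_le_pow_left₀ (ha0 km) (ha k km hk') 2
  have part1 : ∑ k ∈ Finset.univ.filter fun k : Fin n => (k : ℕ) < m, a k * b k ≤ T * ρ := by
    calc ∑ k ∈ Finset.univ.filter fun k : Fin n => (k : ℕ) < m, a k * b k
        ≤ Real.sqrt (∑ k ∈ Finset.univ.filter fun k : Fin n => (k : ℕ) < m, a k ^ 2) *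
          Real.sqrt (∑ k ∈ Finset.univ.filter fun k : Fin n => (k : ℕ) < m, b k ^ 2) :=
          Real.sum_mul_le_sqrt_mul_sqrt _ _ _
      _ ≤ T * ρ := by
          refine mul_le_mul_of_nonneg_left ?_ hT0
          calc Real.sqrt (∑ k ∈ Finset.univ.filter fun k : Fin n => (k : ℕ) < m, b k ^ 2)
              ≤ Real.sqrt (ρ ^ 2) := Real.sqrt_le_sqrt hb2
            _ = ρ := Real.sqrt_sq hρ
  have part2 : ∑ k ∈ Finset.univ.filter fun k : Fin n => ¬ (k : ℕ) < m, a k * b k ≤ ρ * T := by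
    calc ∑ k ∈ Finset.univ.filter fun k : Fin n => ¬ (k : ℕ) < m, a k * b k
        ≤ ∑ k ∈ Finset.univ.filter fun k : Fin n => ¬ (k : ℕ) < m, a km * b k := by
          refine Finset.sum_le_sum fun k hk => ?_
          have hkv : ¬ (k : ℕ) < m := (Finset.mem_filter.1 hk).2
          have hk' : km ≤ k := by rw [Fin.le_def]; simp only [hkm]; omega
          exact mul_le_mul_of_nonneg_right (ha km k hk') (hb0 k)
      _ = a km * ∑ k ∈ Finset.univ.filter fun k : Fin n => ¬ (k : ℕ) < m, b k := by
          rw [Finset.mul_sum]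
      _ ≤ a km * (ρ * Real.sqrt m) := mul_le_mul_of_nonneg_left hb1 (ha0 km)
      _ = ρ * (Real.sqrt m * a km) := by ring
      _ ≤ ρ * T := mul_le_mul_of_nonneg_left hakm hρ
  calc ∑ k, a k * b k
      = (∑ k ∈ Finset.univ.filter fun k : Fin n => (k : ℕ) < m, a k * b k)
        + ∑ k ∈ Finset.univ.filter fun k : Fin n => ¬ (k : ℕ) < m, a k * b k :=
        (Finset.sum_filter_add_sum_filter_not _ _ _).symm
    _ ≤ T * ρ + ρ * T := add_le_add part1 part2
    _ = 2 * ρ * T := by ring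

lemma tail_sum_le (p : ℝ) (hp : 0 < p) (hp1 : p < 1) (m n : ℕ) (hm : 1 ≤ m) :
    ∑ j ∈ Finset.Ico m n, ((j : ℝ) + 1) ^ (-(1/p)) ≤ (1/p - 1)⁻¹ * (m : ℝ) ^ (1 - 1/p) := by
  have hq : (0:ℝ) < 1/p - 1 := by
    have : 1 < 1/p := by rw [lt_div_iff₀ hp]; linarith
    linarith
  have hm0 : (0:ℝ) < m := by exact_mod_cast hm
  rcases le_or_gt n m with hnm | hmn
  · have : Finset.Ico m n = ∅ := Finset.Ico_eq_empty (by omega)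
    rw [this, Finset.sum_empty]
    positivity
  have hint : ∀ k ∈ Finset.Ico m n, IntervalIntegrable (fun t : ℝ => t ^ (-(1/p)))
      volume ((k : ℕ) : ℝ) (((k : ℕ) + 1 : ℕ) : ℝ) := by
    intro k hk
    have hk1 : m ≤ k := (Finset.mem_Ico.1 hk).1
    refine intervalIntegral.intervalIntegrable_rpow (Or.inr ?_)
    intro h0
    rw [Set.mem_uIcc] at h0
    have : (1:ℝ) ≤ (k:ℝ) := by exact_mod_cast le_trans hm hk1
    push_cast at h0
    rcases h0 with ⟨h1, _⟩ | ⟨h1, _⟩ <;> linarith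
  have hterm : ∀ k ∈ Finset.Ico m n, ((k : ℝ) + 1) ^ (-(1/p))
      ≤ ∫ t in ((k:ℕ):ℝ)..(((k:ℕ)+1:ℕ):ℝ), t ^ (-(1/p)) := by
    intro k hk
    have hk1 : m ≤ k := (Finset.mem_Ico.1 hk).1
    have hk0 : (1:ℝ) ≤ (k:ℝ) := by exact_mod_cast le_trans hm hk1
    have hconst : ∫ _t in ((k:ℕ):ℝ)..(((k:ℕ)+1:ℕ):ℝ), ((k : ℝ) + 1) ^ (-(1/p))
        = ((k : ℝ) + 1) ^ (-(1/p)) := by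
      rw [intervalIntegral.integral_const]
      push_cast
      ring_nf
    rw [← hconst]
    refine intervalIntegral.integral_mono_on (by push_cast; linarith)
      (intervalIntegrable_const) (hint k hk) ?_
    intro t ht
    push_cast at ht
    rcases ht with ⟨ht1, ht2⟩
    have hple : -(1/p) ≤ 0 := by
      have : (0:ℝ) < 1/p := by positivity
      linarith
    exact Real.rpow_le_rpow_of_nonpos (by linarith) (by linarith) hple
  calc ∑ j ∈ Finset.Ico m n, ((j : ℝ) + 1) ^ (-(1/p))
      ≤ ∑ j ∈ Finset.Ico m n, ∫ t in ((j:ℕ):ℝ)..(((j:ℕ)+1:ℕ):ℝ), t ^ (-(1/p)) :=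
        Finset.sum_le_sum hterm
    _ = ∫ t in (m:ℝ)..(n:ℝ), t ^ (-(1/p)) :=
        intervalIntegral.sum_integral_adjacent_intervals_Ico hmn.le
          (fun k hk => hint k (Finset.mem_Ico.mpr hk))
    _ ≤ (1/p - 1)⁻¹ * (m : ℝ) ^ (1 - 1/p) := by
        rw [_root_.integral_rpow
          (Or.inr ⟨fun h => by simp only [neg_inj] at h; rw [h] at hq; norm_num at hq, ?_⟩)]
        · have hn0 : (0:ℝ) ≤ (n:ℝ) ^ (-(1/p) + 1) := Real.rpow_nonneg (by positivity) _
          have hexp : -(1/p) + 1 = -(1/p - 1) := by ring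
          rw [div_le_iff_of_neg (by linarith : -(1/p) + 1 < 0)]
          have hmexp : (m:ℝ) ^ (1 - 1/p) = (m:ℝ) ^ (-(1/p) + 1) := by ring_nf
          rw [hmexp]
          set M := (m:ℝ) ^ (-(1/p)+1) with hM
          have hqne : (1/p - 1) ≠ 0 := ne_of_gt hq
          have : (1/p - 1)⁻¹ * M * (-(1/p) + 1) = -((1/p-1)⁻¹ * (1/p-1)) * M := by ring
          rw [this, inv_mul_cancel₀ hqne]
          linarith
        · intro h0
          rw [Set.mem_uIcc] at h0
          have hn1 : (1:ℝ) ≤ (n:ℝ) := by exact_mod_cast le_trans hm hmn.le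
          rcases h0 with ⟨h1, _⟩ | ⟨h1, _⟩ <;> linarith

lemma main_core (n m : ℕ) (hm : 1 ≤ m) (hmn : m ≤ n)
    (x z : EuclideanSpace ℝ (Fin n)) (σ : Equiv.Perm (Fin n))
    (hσ : ∀ i j : Fin n, i ≤ j → |x (σ j)| ≤ |x (σ i)|)
    (ρ : ℝ) (hρ : 0 ≤ ρ) (hz : ‖z‖ ≤ ρ)
    (hb1 : ∀ τ : Equiv.Perm (Fin n), (∀ i j : Fin n, i ≤ j → |z (τ j)| ≤ |z (τ i)|) →
      ∑ k ∈ Finset.univ.filter fun k : Fin n => ¬ (k : ℕ) < m, |z (τ k)| ≤ ρ * Real.sqrt m) :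
    ⟪x, z⟫ ≤ 2 * ρ *
      Real.sqrt (∑ i ∈ Finset.univ.filter fun i : Fin n => (i : ℕ) < m, |x (σ i)| ^ 2) := by
  set τ : Equiv.Perm (Fin n) := Tuple.sort (fun i => -|z i|) with hτdef
  have hmono : Monotone ((fun i => -|z i|) ∘ τ) := Tuple.monotone_sort _
  have hτ : ∀ i j : Fin n, i ≤ j → |z (τ j)| ≤ |z (τ i)| := by
    intro i j hij
    have := hmono hij
    simpa using this
  set a : Fin n → ℝ := fun k => |x (σ k)| with ha_def
  set b : Fin n → ℝ := fun k => |z (τ k)| with hb_def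
  have ha0 : ∀ i, 0 ≤ a i := fun i => abs_nonneg _
  have hb0 : ∀ i, 0 ≤ b i := fun i => abs_nonneg _
  have hinner : ⟪x, z⟫ = ∑ i, x i * z i := by
    simp [PiLp.inner_apply, RCLike.inner_apply, mul_comm]
  have step1 : ⟪x, z⟫ ≤ ∑ i, |x i| * |z i| := by
    rw [hinner]
    exact Finset.sum_le_sum fun i _ => (le_abs_self _).trans (le_of_eq (abs_mul _ _))
  set prm : Equiv.Perm (Fin n) := σ⁻¹ * τ with hprm
  have step2 : ∑ i, |x i| * |z i| = ∑ k, a (prm k) * b k := by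
    rw [← Equiv.sum_comp τ (fun i => |x i| * |z i|)]
    refine Finset.sum_congr rfl fun k _ => ?_
    simp only [ha_def, hb_def, hprm, Equiv.Perm.mul_apply]
    rw [Equiv.Perm.inv_def, Equiv.apply_symm_apply]
  have step3 : ∑ k, a (prm k) * b k = ∑ k, a k * b (prm⁻¹ k) := by
    rw [← Equiv.sum_comp prm⁻¹ (fun k => a (prm k) * b k)]
    refine Finset.sum_congr rfl fun k _ => ?_
    simp
  have hmv : Monovary a b := by
    intro i j hij
    have hji : j ≤ i := by
      by_contra h
      push_neg at h
      exact absurd (hτ i j h.le) (not_le.mpr hij)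
    exact hσ j i hji
  have step4 : ∑ k, a k * b (prm⁻¹ k) ≤ ∑ k, a k * b k :=
    hmv.sum_mul_comp_perm_le_sum_mul
  have hb2 : ∑ k ∈ Finset.univ.filter fun k : Fin n => (k : ℕ) < m, b k ^ 2 ≤ ρ ^ 2 := by
    calc ∑ k ∈ Finset.univ.filter fun k : Fin n => (k : ℕ) < m, b k ^ 2
        ≤ ∑ k, b k ^ 2 := Finset.sum_le_sum_of_subset_of_nonneg (Finset.filter_subset _ _)
          (fun i _ _ => sq_nonneg _)
      _ = ∑ i, z i ^ 2 := by
          rw [← Equiv.sum_comp τ (fun i => z i ^ 2)]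
          exact Finset.sum_congr rfl fun k _ => by simp [hb_def, sq_abs]
      _ ≤ ρ ^ 2 := by
          have hnorm : ‖z‖ ^ 2 = ∑ i, z i ^ 2 := by
            rw [EuclideanSpace.norm_eq, Real.sq_sqrt (Finset.sum_nonneg fun i _ => sq_nonneg _)]
            exact Finset.sum_congr rfl fun i _ => by rw [Real.norm_eq_abs, sq_abs]
          rw [← hnorm]
          exact pow_le_pow_left₀ (norm_nonneg _) hz 2
  calc ⟪x, z⟫ ≤ ∑ i, |x i| * |z i| := step1
    _ = ∑ k, a (prm k) * b k := step2
    _ = ∑ k, a k * b (prm⁻¹ k) := step3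
    _ ≤ ∑ k, a k * b k := step4
    _ ≤ 2 * ρ * Real.sqrt (∑ k ∈ Finset.univ.filter fun k : Fin n => (k : ℕ) < m, a k ^ 2) :=
        key_lemma n m hm hmn a b ha0 hb0 hσ ρ hρ hb2 (hb1 τ hτ)

/-- Lemma 4.2: for `x ∈ ℝⁿ`, with `(x_i^*)` the non-increasing rearrangement of `(|x_i|)`
(realized by a permutation `σ` making `i ↦ |x (σ i)|` non-increasing):
the supremum of `⟨x, z⟩` over `B^n_{p,∞} ∩ ρ B₂ⁿ` (resp. `B₁ⁿ ∩ ρ B₂ⁿ`) is at most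
`2 ρ (Σ_{i≤m} (x_i^*)²)^{1/2}` for the corresponding value of `ρ`. -/
theorem statement12 (n m : ℕ) (hm : 1 ≤ m) (hmn : m ≤ n)
    (x : EuclideanSpace ℝ (Fin n)) (σ : Equiv.Perm (Fin n))
    (hσ : ∀ i j : Fin n, i ≤ j → |x (σ j)| ≤ |x (σ i)|) :
    (∀ p : ℝ, 0 < p → p < 1 →
      ∀ z ∈ weakLpBall n p ∩
        Metric.closedBall (0 : EuclideanSpace ℝ (Fin n))
          ((1 / p - 1)⁻¹ * (m : ℝ) ^ (1 / 2 - 1 / p)),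
        ⟪x, z⟫ ≤ 2 * ((1 / p - 1)⁻¹ * (m : ℝ) ^ (1 / 2 - 1 / p)) *
          Real.sqrt (∑ i ∈ Finset.univ.filter fun i : Fin n => (i : ℕ) < m,
            |x (σ i)| ^ 2)) ∧
    (∀ z ∈ l1Ball n ∩
        Metric.closedBall (0 : EuclideanSpace ℝ (Fin n)) (1 / Real.sqrt m),
      ⟪x, z⟫ ≤ 2 * (1 / Real.sqrt m) *
        Real.sqrt (∑ i ∈ Finset.univ.filter fun i : Fin n => (i : ℕ) < m,
          |x (σ i)| ^ 2)) := by
  have hm0 : (0:ℝ) < m := by exact_mod_cast hm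
  have hsm : (0:ℝ) < Real.sqrt m := Real.sqrt_pos.mpr hm0
  constructor
  · -- weak ℓp case
    intro p hp hp1 z hz
    obtain ⟨hz1, hz2⟩ := hz
    have hq : (0:ℝ) < 1/p - 1 := by
      have : 1 < 1/p := by rw [lt_div_iff₀ hp]; linarith
      linarith
    set ρ : ℝ := (1 / p - 1)⁻¹ * (m : ℝ) ^ (1 / 2 - 1 / p) with hρdef
    have hρ : 0 ≤ ρ := le_of_lt (mul_pos (inv_pos.mpr hq) (Real.rpow_pos_of_pos hm0 _))
    have hznorm : ‖z‖ ≤ ρ := by rwa [mem_closedBall_zero_iff] at hz2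
    refine main_core n m hm hmn x z σ hσ ρ hρ hznorm ?_
    intro τ hτ
    -- pointwise bound on sorted values
    have hbk : ∀ k : Fin n, |z (τ k)| ≤ (((k:ℕ):ℝ) + 1) ^ (-(1/p)) := by
      intro k
      rcases eq_or_lt_of_le (abs_nonneg (z (τ k))) with h0 | hpos
      · rw [← h0]; positivity
      · set s := |z (τ k)| with hsdef
        have hcard : ((k:ℕ) + 1 : ℕ) ≤ (Finset.univ.filter fun i : Fin n => s ≤ |z i|).card := by
          have hc : (Finset.univ.filter fun j : Fin n => (j:ℕ) < (k:ℕ)+1).card = (k:ℕ)+1 :=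
            card_filter_fin_lt n _ (by omega)
          rw [← hc]
          refine Finset.card_le_card_of_injOn τ ?_ ?_
          · intro j hj
            simp only [Finset.mem_coe, Finset.mem_filter, Finset.mem_univ, true_and] at hj ⊢
            have hjk : j ≤ k := by rw [Fin.le_def]; omega
            exact hτ j k hjk
          · exact fun a _ c _ h => τ.injective h
        have hwz := hz1 s hpos
        have h1 : (((k:ℕ):ℝ) + 1) ≤ s ^ (-p) := by
          refine le_trans ?_ hwz
          exact_mod_cast hcard
        have h2 : (s ^ (-p)) ^ (-(1/p)) ≤ (((k:ℕ):ℝ) + 1) ^ (-(1/p)) := by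
          refine Real.rpow_le_rpow_of_nonpos (by positivity) h1 ?_
          have : (0:ℝ) < 1/p := by positivity
          linarith
        calc s = (s ^ (-p)) ^ (-(1/p)) := by
              rw [← Real.rpow_mul hpos.le]
              rw [show -p * -(1/p) = 1 from by field_simp, Real.rpow_one]
          _ ≤ _ := h2
    calc ∑ k ∈ Finset.univ.filter fun k : Fin n => ¬ (k : ℕ) < m, |z (τ k)|
        ≤ ∑ k ∈ Finset.univ.filter fun k : Fin n => ¬ (k : ℕ) < m, (((k:ℕ):ℝ) + 1) ^ (-(1/p)) :=
          Finset.sum_le_sum fun k _ => hbk k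
      _ = ∑ j ∈ Finset.Ico m n, ((j : ℝ) + 1) ^ (-(1/p)) := by
          rw [Finset.sum_filter]
          rw [Fin.sum_univ_eq_sum_range
            (fun j => if ¬ j < m then ((j:ℝ) + 1) ^ (-(1/p)) else 0) n]
          rw [← Finset.sum_filter]
          congr 1
          ext j
          simp only [Finset.mem_filter, Finset.mem_range, Finset.mem_Ico, not_lt]
          omega
      _ ≤ (1/p - 1)⁻¹ * (m : ℝ) ^ (1 - 1/p) := tail_sum_le p hp hp1 m n hm
      _ = ρ * Real.sqrt m := by
          rw [hρdef, Real.sqrt_eq_rpow, mul_assoc, ← Real.rpow_add hm0,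
            show 1 / 2 - 1 / p + 1 / 2 = 1 - 1/p from by ring]
  · -- ℓ₁ case
    intro z hz
    obtain ⟨hz1, hz2⟩ := hz
    have hρ : (0:ℝ) ≤ 1 / Real.sqrt m := by positivity
    have hznorm : ‖z‖ ≤ 1 / Real.sqrt m := by rwa [mem_closedBall_zero_iff] at hz2
    refine main_core n m hm hmn x z σ hσ _ hρ hznorm ?_
    intro τ hτ
    calc ∑ k ∈ Finset.univ.filter fun k : Fin n => ¬ (k : ℕ) < m, |z (τ k)|
        ≤ ∑ k, |z (τ k)| := Finset.sum_le_sum_of_subset_of_nonneg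
          (Finset.filter_subset _ _) (fun i _ _ => abs_nonneg _)
      _ = ∑ i, |z i| := Equiv.sum_comp τ (fun i => |z i|)
      _ ≤ 1 := hz1
      _ = 1 / Real.sqrt m * Real.sqrt m := by
          rw [div_mul_cancel₀]
          exact ne_of_gt hsm
end
end

section
/- For every 1 ≤ m ≤ n and every subset I ⊂ {1,…,n} with |I| ≤ m, one has √|I|·B₁ⁿ ∩ S^{n−1} ⊆ 2·conv(U_m) ∩ S^{n−1}, where U_m = {x ∈ S^{n−1} : |{i : x_i ≠ 0}| ≤ m}. -/
open MeasureTheory Real Set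
open scoped RealInnerProductSpace Pointwise

noncomputable section

/-- The set of unit vectors with support of size at most `m`. -/
def sparseSphere (n m : ℕ) : Set (EuclideanSpace ℝ (Fin n)) :=
  {x | x ∈ Metric.sphere (0 : EuclideanSpace ℝ (Fin n)) 1 ∧
    (Finset.univ.filter fun i : Fin n => x i ≠ 0).card ≤ m}

lemma single_mem_sparse (n m : ℕ) (hm : 1 ≤ m) (hn : 1 ≤ n) :
    (EuclideanSpace.single (⟨0, hn⟩ : Fin n) (1:ℝ)) ∈ sparseSphere n m := by
  constructor
  · simp [mem_sphere_iff_norm, EuclideanSpace.norm_single]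
  · calc (Finset.univ.filter fun i : Fin n =>
        EuclideanSpace.single (⟨0, hn⟩ : Fin n) (1:ℝ) i ≠ 0).card
        ≤ (Finset.univ.filter fun i : Fin n => i = (⟨0, hn⟩ : Fin n)).card := by
          apply Finset.card_le_card
          intro i hi
          simp only [Finset.mem_filter, Finset.mem_univ, true_and] at hi ⊢
          by_contra hne
          exact hi (by simp [EuclideanSpace.single_apply, hne])
    _ ≤ m := by simp [Finset.filter_eq']; omega

lemma zero_mem_conv (n m : ℕ) (hm : 1 ≤ m) (hn : 1 ≤ n) :
    (0 : EuclideanSpace ℝ (Fin n)) ∈ convexHull ℝ (sparseSphere n m) := by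
  have hes := single_mem_sparse n m hm hn
  set e : EuclideanSpace ℝ (Fin n) := EuclideanSpace.single ⟨0, hn⟩ 1 with he
  have hes : e ∈ sparseSphere n m := single_mem_sparse n m hm hn
  have hnes : -e ∈ sparseSphere n m := by
    constructor
    · simp only [mem_sphere_iff_norm, sub_zero, norm_neg]
      simp [he, EuclideanSpace.norm_single]
    · have : (Finset.univ.filter fun i : Fin n => (-e) i ≠ 0)
          = (Finset.univ.filter fun i : Fin n => e i ≠ 0) := by
        apply Finset.filter_congr; intro i _
        simp
      rw [this]; exact hes.2
  have h := (convex_convexHull ℝ (sparseSphere n m))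
    (subset_convexHull ℝ _ hes) (subset_convexHull ℝ _ hnes)
    (by norm_num : (0:ℝ) ≤ 1/2) (by norm_num : (0:ℝ) ≤ 1/2) (by norm_num)
  have : (1/2 : ℝ) • e + (1/2 : ℝ) • (-e) = 0 := by
    rw [smul_neg]; abel
  rwa [this] at h

open Finset in
lemma key (n m : ℕ) (hm : 1 ≤ m) (hmn : m ≤ n)
    (x : EuclideanSpace ℝ (Fin n)) (hx2 : ‖x‖ = 1)
    (hx1 : ∑ i, |x i| ≤ Real.sqrt m) :
    x ∈ (2:ℝ) • convexHull ℝ (sparseSphere n m) := by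
  have hn : 1 ≤ n := hm.trans hmn
  have hm0 : 0 < m := hm
  set σ := Tuple.sort (fun i : Fin n => -|x i|) with hσ
  have hmono : Monotone ((fun i : Fin n => -|x i|) ∘ σ) := Tuple.monotone_sort _
  have hanti : ∀ s t : Fin n, s ≤ t → |x (σ t)| ≤ |x (σ s)| := by
    intro s t hst
    have := hmono hst
    simp only [Function.comp_apply, neg_le_neg_iff] at this
    exact this
  set idx : Fin n → ℕ := fun i => (σ.symm i : ℕ) with hidx
  have hidxlt : ∀ i, idx i < n := fun i => (σ.symm i).2
  have hidxinj : Function.Injective idx := by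
    intro a b h
    exact σ.symm.injective (Fin.ext h)
  set B : ℕ → Finset (Fin n) := fun j => univ.filter (fun i => idx i / m = j) with hB
  -- basic interval facts
  have hmemB : ∀ j, ∀ i ∈ B j, j * m ≤ idx i ∧ idx i < j * m + m := by
    intro j i hi
    have hi2 : idx i / m = j := by simpa [hB] using hi
    have h1 := Nat.div_add_mod (idx i) m
    have h2 := Nat.mod_lt (idx i) hm0
    rw [hi2] at h1
    have hcomm : j * m = m * j := Nat.mul_comm _ _
    omega
  have hcardB : ∀ j, (B j).card ≤ m := by
    intro j
    have : (B j).card ≤ (Finset.Ico (j*m) (j*m+m)).card := by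
      apply Finset.card_le_card_of_injOn idx
      · intro i hi
        have := hmemB j i hi
        simp [Finset.mem_Ico]; omega
      · exact hidxinj.injOn
    simpa using this
  -- antitone across blocks
  have hcross : ∀ j j' : ℕ, j' < j → ∀ i ∈ B j, ∀ i' ∈ B j', |x i| ≤ |x i'| := by
    intro j j' hjj i hi i' hi'
    have h1 := hmemB j i hi
    have h2 := hmemB j' i' hi'
    have hlt : idx i' < idx i := by nlinarith
    have h := hanti (σ.symm i') (σ.symm i) (le_of_lt (by exact hlt))
    have e1 : σ (σ.symm i) = i := σ.apply_symm_apply i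
    have e2 : σ (σ.symm i') = i' := σ.apply_symm_apply i'
    rw [e1, e2] at h
    exact h
  -- full previous block
  have hfull : ∀ k : ℕ, (B (k+1)).Nonempty → (B k).card = m := by
    intro k ⟨i0, hi0⟩
    have h0 := hmemB (k+1) i0 hi0
    have hsucc : (k+1) * m = k*m + m := by ring
    have hjn : (k+1) * m ≤ n := by
      have := hidxlt i0
      omega
    refine le_antisymm (hcardB _) ?_
    have key : (Finset.Ico (k*m) ((k+1)*m)).card ≤ (B k).card := by
      apply Finset.card_le_card_of_injOn (fun t => σ ⟨t % n, Nat.mod_lt _ (by omega)⟩)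
      · intro t ht
        simp only [Finset.mem_coe, Finset.mem_Ico] at ht
        have htn : t < n := by omega
        have hmod : t % n = t := Nat.mod_eq_of_lt htn
        simp only [Finset.mem_coe, hB, mem_filter, Finset.mem_univ, true_and, hidx]
        have heq : σ.symm (σ ⟨t % n, Nat.mod_lt _ (by omega)⟩) = ⟨t % n, Nat.mod_lt _ (by omega)⟩ :=
          σ.symm_apply_apply _
        rw [heq]
        show t % n / m = k
        rw [hmod]
        exact Nat.div_eq_of_lt_le (by omega) (by omega)
      · intro a ha b hb hab
        simp only [Finset.coe_Ico, Set.mem_Ico] at ha hb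
        have han : a < n := by omega
        have hbn : b < n := by omega
        have h := σ.injective hab
        have h2 : a % n = b % n := congrArg Fin.val h
        rw [Nat.mod_eq_of_lt han, Nat.mod_eq_of_lt hbn] at h2
        exact h2
    rw [Nat.card_Ico] at key
    omega
  -- sums over blocks
  set S : ℕ → ℝ := fun j => ∑ i ∈ B j, |x i| with hS
  set Q : ℕ → ℝ := fun j => ∑ i ∈ B j, (x i)^2 with hQ
  set c : ℕ → ℝ := fun j => Real.sqrt (Q j) with hc
  have hSnn : ∀ j, 0 ≤ S j := fun j => Finset.sum_nonneg (fun i _ => abs_nonneg _)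
  have hQnn : ∀ j, 0 ≤ Q j := fun j => Finset.sum_nonneg (fun i _ => sq_nonneg _)
  have hcnn : ∀ j, 0 ≤ c j := fun j => Real.sqrt_nonneg _
  set y : ℕ → EuclideanSpace ℝ (Fin n) :=
    fun j => WithLp.toLp 2 (fun i => if idx i / m = j then x i else 0) with hy
  have hblk : ∀ i : Fin n, idx i / m ∈ Finset.range n := by
    intro i
    simp only [Finset.mem_range]
    exact lt_of_le_of_lt (Nat.div_le_self _ _) (hidxlt i)
  have hxdecomp : x = ∑ j ∈ Finset.range n, y j := by
    ext i
    have happ : (∑ j ∈ Finset.range n, y j) i = ∑ j ∈ Finset.range n, y j i :=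
      by rw [WithLp.ofLp_sum, Finset.sum_apply]
    rw [happ]
    rw [Finset.sum_ite_eq (Finset.range n) (idx i / m) (fun _ => x i), if_pos (hblk i)]
  have hsum_sq : ∑ i, (x i)^2 = 1 := by
    have h := EuclideanSpace.norm_eq x
    rw [hx2] at h
    have h2 : Real.sqrt (∑ i, ‖x i‖^2) = 1 := h.symm
    have h3 : ∑ i, ‖x i‖^2 = 1 := by
      have := Real.sqrt_eq_one.mp h2
      exact this
    calc ∑ i, (x i)^2 = ∑ i, ‖x i‖^2 := by
          apply Finset.sum_congr rfl
          intro i _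
          rw [Real.norm_eq_abs, sq_abs]
      _ = 1 := h3
  have hQsum : ∀ j, ∑ i, (y j i)^2 = Q j := by
    intro j
    have hQj : Q j = ∑ i ∈ Finset.univ.filter (fun i => idx i / m = j), (x i)^2 := rfl
    rw [hQj, Finset.sum_filter]
    apply Finset.sum_congr rfl
    intro i _
    simp only [hy]
    split_ifs <;> simp
  have hnormy : ∀ j, ‖y j‖ = c j := by
    intro j
    rw [EuclideanSpace.norm_eq, hc]
    congr 1
    rw [← hQsum j]
    apply Finset.sum_congr rfl
    intro i _
    rw [Real.norm_eq_abs, sq_abs]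
  have hsqm : (0:ℝ) < Real.sqrt m := Real.sqrt_pos.mpr (by exact_mod_cast hm0)
  have hc0 : c 0 ≤ 1 := by
    have hQ0 : Q 0 ≤ 1 := by
      rw [← hsum_sq]
      exact Finset.sum_le_sum_of_subset_of_nonneg (Finset.subset_univ _)
        (fun i _ _ => sq_nonneg _)
    calc c 0 = Real.sqrt (Q 0) := rfl
      _ ≤ Real.sqrt 1 := Real.sqrt_le_sqrt hQ0
      _ = 1 := Real.sqrt_one
  have hcj : ∀ k : ℕ, c (k+1) ≤ S k / Real.sqrt m := by
    intro k
    rcases (B (k+1)).eq_empty_or_nonempty with hemp | hne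
    · have : Q (k+1) = 0 := by
        show ∑ i ∈ B (k+1), (x i)^2 = 0
        rw [hemp, Finset.sum_empty]
      have : c (k+1) = 0 := by rw [hc]; simp [this]
      rw [this]
      positivity
    · have hcard : (B k).card = m := hfull k hne
      have hpt : ∀ i ∈ B (k+1), (m:ℝ) * |x i| ≤ S k := by
        intro i hi
        have hle : ∀ i' ∈ B k, |x i| ≤ |x i'| :=
          fun i' hi' => hcross (k+1) k (by omega) i hi i' hi'
        calc (m:ℝ) * |x i| = ∑ _i' ∈ B k, |x i| := by
              rw [Finset.sum_const, hcard, nsmul_eq_mul]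
          _ ≤ ∑ i' ∈ B k, |x i'| := Finset.sum_le_sum hle
          _ = S k := rfl
      have hQb : Q (k+1) ≤ (S k)^2 / m := by
        have h1 : ∀ i ∈ B (k+1), (x i)^2 ≤ (S k / m)^2 := by
          intro i hi
          have h2 : |x i| ≤ S k / m := by
            rw [le_div_iff₀ (by exact_mod_cast hm0 : (0:ℝ) < m)]
            linarith [hpt i hi]
          calc (x i)^2 = |x i|^2 := (sq_abs _).symm
            _ ≤ (S k / m)^2 := by
              apply pow_le_pow_left₀ (abs_nonneg _) h2
        have h3 : Q (k+1) ≤ (B (k+1)).card * (S k / m)^2 := by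
          calc Q (k+1) = ∑ i ∈ B (k+1), (x i)^2 := rfl
            _ ≤ ∑ _i ∈ B (k+1), (S k / m)^2 := Finset.sum_le_sum h1
            _ = (B (k+1)).card * (S k / m)^2 := by rw [Finset.sum_const, nsmul_eq_mul]
        have h4 : ((B (k+1)).card : ℝ) ≤ m := by exact_mod_cast hcardB (k+1)
        have h5 : (0:ℝ) < m := by exact_mod_cast hm0
        calc Q (k+1) ≤ (B (k+1)).card * (S k / m)^2 := h3
          _ ≤ m * (S k / m)^2 := by nlinarith [sq_nonneg (S k / m)]
          _ = (S k)^2 / m := by field_simp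
      calc c (k+1) = Real.sqrt (Q (k+1)) := rfl
        _ ≤ Real.sqrt ((S k)^2 / m) := Real.sqrt_le_sqrt hQb
        _ = S k / Real.sqrt m := by
            rw [Real.sqrt_div (sq_nonneg _), Real.sqrt_sq (hSnn k)]
  -- sum of S over blocks equals l1 norm
  have hsumS : ∑ j ∈ Finset.range n, S j = ∑ i, |x i| := by
    exact Finset.sum_fiberwise_of_maps_to (fun i _ => hblk i) (fun i => |x i|)
  -- total bound on sum of c
  have hsumc : ∑ j ∈ Finset.range n, c j ≤ 2 := by
    have hn' : n - 1 + 1 = n := by omega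
    have hsplit : ∑ j ∈ Finset.range n, c j
        = (∑ j ∈ Finset.range (n-1), c (j+1)) + c 0 := by
      rw [← hn', Finset.sum_range_succ']
      norm_num
    have htail : ∑ j ∈ Finset.range (n-1), c (j+1) ≤ 1 := by
      have h1 : ∑ j ∈ Finset.range (n-1), c (j+1)
          ≤ ∑ j ∈ Finset.range (n-1), S j / Real.sqrt m :=
        Finset.sum_le_sum (fun j _ => hcj j)
      have h2 : ∑ j ∈ Finset.range (n-1), S j / Real.sqrt m
          = (∑ j ∈ Finset.range (n-1), S j) / Real.sqrt m := by
        rw [Finset.sum_div]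
      have h3 : ∑ j ∈ Finset.range (n-1), S j ≤ ∑ j ∈ Finset.range n, S j := by
        apply Finset.sum_le_sum_of_subset_of_nonneg
        · exact Finset.range_subset_range.mpr (by omega)
        · exact fun j _ _ => hSnn j
      have h4 : ∑ j ∈ Finset.range n, S j ≤ Real.sqrt m := by rw [hsumS]; exact hx1
      calc ∑ j ∈ Finset.range (n-1), c (j+1)
          ≤ (∑ j ∈ Finset.range (n-1), S j) / Real.sqrt m := by rw [← h2]; exact h1
        _ ≤ Real.sqrt m / Real.sqrt m := by
            gcongr
            exact le_trans h3 h4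
        _ = 1 := div_self (ne_of_gt hsqm)
    linarith [hsplit, htail, hc0]
  -- unit vectors
  set e : EuclideanSpace ℝ (Fin n) := EuclideanSpace.single ⟨0, hn⟩ 1 with he
  have hes : e ∈ sparseSphere n m := single_mem_sparse n m hm hn
  set u : ℕ → EuclideanSpace ℝ (Fin n) :=
    fun j => if c j = 0 then e else (c j)⁻¹ • y j with hu
  have hyzero : ∀ j, c j = 0 → y j = 0 := by
    intro j hj
    have : ‖y j‖ = 0 := by rw [hnormy j, hj]
    exact norm_eq_zero.mp this
  have hcu : ∀ j, c j • u j = y j := by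
    intro j
    by_cases hj : c j = 0
    · rw [show u j = e by simp [hu, hj], hj, zero_smul, hyzero j hj]
    · rw [show u j = (c j)⁻¹ • y j by simp [hu, hj], smul_inv_smul₀ hj]
  have humem : ∀ j, u j ∈ sparseSphere n m := by
    intro j
    by_cases hj : c j = 0
    · rw [show u j = e by simp [hu, hj]]
      exact hes
    · have hcpos : 0 < c j := lt_of_le_of_ne (hcnn j) (Ne.symm hj)
      have hun : u j = (c j)⁻¹ • y j := by simp [hu, hj]
      constructor
      · rw [mem_sphere_iff_norm, sub_zero, hun, norm_smul, hnormy j]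
        rw [Real.norm_eq_abs, abs_inv, abs_of_pos hcpos]
        exact inv_mul_cancel₀ hj
      · have hsub : (Finset.univ.filter fun i : Fin n => u j i ≠ 0) ⊆ B j := by
          intro i hi
          simp only [Finset.mem_filter, Finset.mem_univ, true_and] at hi
          simp only [hB, Finset.mem_filter, Finset.mem_univ, true_and]
          by_contra hcon
          apply hi
          rw [hun]
          show (c j)⁻¹ * y j i = 0
          have hyi : y j i = 0 := by simp [hy, hcon]
          rw [hyi, mul_zero]
        calc (Finset.univ.filter fun i : Fin n => u j i ≠ 0).card
            ≤ (B j).card := Finset.card_le_card hsub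
          _ ≤ m := hcardB j
  set t := ∑ j ∈ Finset.range n, c j with htdef
  have hxeq : x = ∑ j ∈ Finset.range n, c j • u j := by
    rw [hxdecomp]
    exact Finset.sum_congr rfl (fun j _ => (hcu j).symm)
  have htpos : 0 < t := by
    have h2 : ‖x‖ ≤ ∑ j ∈ Finset.range n, ‖c j • u j‖ := by
      rw [hxeq]
      exact norm_sum_le _ _
    have h3 : ∀ j ∈ Finset.range n, ‖c j • u j‖ = c j := by
      intro j _
      rw [norm_smul, Real.norm_eq_abs, abs_of_nonneg (hcnn j)]
      have hu1 : ‖u j‖ = 1 := by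
        have := (humem j).1
        rwa [mem_sphere_iff_norm, sub_zero] at this
      rw [hu1, mul_one]
    have h4 : ∑ j ∈ Finset.range n, ‖c j • u j‖ = t := Finset.sum_congr rfl h3
    rw [hx2] at h2
    linarith
  have hcm : (Finset.range n).centerMass c u ∈ convexHull ℝ (sparseSphere n m) :=
    Finset.centerMass_mem_convexHull _ (fun j _ => hcnn j) htpos (fun j _ => humem j)
  have hcm2 : (Finset.range n).centerMass c u = t⁻¹ • x := by
    rw [Finset.centerMass, ← hxeq]
  rw [hcm2] at hcm
  have h0 := zero_mem_conv n m hm hn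
  have hhalf : (2:ℝ)⁻¹ • x ∈ convexHull ℝ (sparseSphere n m) := by
    have hcomb := (convex_convexHull ℝ (sparseSphere n m)) hcm h0
      (show (0:ℝ) ≤ t/2 by linarith) (show (0:ℝ) ≤ 1 - t/2 by linarith [hsumc]) (by ring)
    have heq : (t/2) • (t⁻¹ • x) + (1 - t/2) • (0 : EuclideanSpace ℝ (Fin n))
        = (2:ℝ)⁻¹ • x := by
      rw [smul_zero, add_zero, smul_smul]
      congr 1
      field_simp [htpos.ne']
    rwa [heq] at hcomb
  have hx2eq : x = (2:ℝ) • ((2:ℝ)⁻¹ • x) := by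
    rw [smul_smul]
    norm_num
  rw [hx2eq]
  exact Set.smul_mem_smul_set hhalf
/-- Equation (4): `√|I| B₁ⁿ ∩ S^{n-1} ⊆ 2 conv(U_m) ∩ S^{n-1}` for any `I` with `|I| ≤ m`. -/
theorem statement13 (n m : ℕ) (hm : 1 ≤ m) (hmn : m ≤ n)
    (I : Finset (Fin n)) (hI : I.card ≤ m) :
    (Real.sqrt I.card • l1Ball n) ∩ Metric.sphere (0 : EuclideanSpace ℝ (Fin n)) 1 ⊆
      ((2 : ℝ) • convexHull ℝ (sparseSphere n m)) ∩
        Metric.sphere (0 : EuclideanSpace ℝ (Fin n)) 1 := by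
  intro x hx
  obtain ⟨hxb, hxs⟩ := hx
  refine ⟨?_, hxs⟩
  obtain ⟨z, hz, hzx⟩ := hxb
  have hxn : ‖x‖ = 1 := by rwa [mem_sphere_iff_norm, sub_zero] at hxs
  have hznn : (0:ℝ) ≤ Real.sqrt I.card := Real.sqrt_nonneg _
  have hk : (I.card : ℝ) ≤ m := by exact_mod_cast hI
  have happ : ∀ i, x i = Real.sqrt I.card * z i := by
    intro i
    rw [← hzx]
    rfl
  have hz1 : ∑ i, |z i| ≤ 1 := hz
  have hx1 : ∑ i, |x i| ≤ Real.sqrt m := by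
    calc ∑ i, |x i| = ∑ i, Real.sqrt I.card * |z i| := by
          apply Finset.sum_congr rfl
          intro i _
          rw [happ i, abs_mul, abs_of_nonneg hznn]
      _ = Real.sqrt I.card * ∑ i, |z i| := by rw [Finset.mul_sum]
      _ ≤ Real.sqrt I.card * 1 := by
          apply mul_le_mul_of_nonneg_left hz1 hznn
      _ = Real.sqrt I.card := mul_one _
      _ ≤ Real.sqrt m := Real.sqrt_le_sqrt hk
  exact key n m hm hmn x hxn hx1
end
end

section
/- There exists an absolute constant c > 0 such that for every 1 ≤ m ≤ n, ℓ_*(conv(U_m)) ≤ c·√(m·log(c·n/m)), where U_m = {x ∈ S^{n−1} : |{i : x_i ≠ 0}| ≤ m}. -/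
open MeasureTheory ProbabilityTheory Real Set
open scoped RealInnerProductSpace Pointwise

noncomputable section

/-- `ℓ_*(T) = E sup_{t ∈ T} |Σ g_i t_i|` for independent standard Gaussians `g_i`. -/
def ellStar (n : ℕ) (T : Set (EuclideanSpace ℝ (Fin n))) : ℝ :=
  ∫ g : Fin n → ℝ, (⨆ t ∈ T, |∑ i, g i * t i|) ∂(Measure.pi fun _ => gaussianReal 0 1)

section Aux
open scoped ENNReal NNReal

lemma gauss_pdf_eq (x : ℝ) : gaussianPDFReal 0 1 x = (√(2*π))⁻¹ * rexp (-x^2/2) := by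
  simp [gaussianPDFReal]

lemma gauss_int (f : ℝ → ℝ) :
    ∫ x, f x ∂(gaussianReal 0 1) = ∫ x, gaussianPDFReal 0 1 x * f x := by
  rw [gaussianReal_of_var_ne_zero 0 one_ne_zero, gaussianPDF_def]
  simp only [ENNReal.ofReal]
  rw [integral_withDensity_eq_integral_smul
    ((measurable_gaussianPDFReal 0 1).real_toNNReal)]
  congr 1; ext x
  simp [NNReal.smul_def, Real.coe_toNNReal _ (gaussianPDFReal_nonneg 0 1 x)]

lemma integrable_exp_sq_quarter : Integrable (fun x => rexp (x^2/4)) (gaussianReal 0 1) := by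
  rw [gaussianReal_of_var_ne_zero 0 one_ne_zero, gaussianPDF_def]
  simp only [ENNReal.ofReal]
  rw [integrable_withDensity_iff_integrable_smul
    ((measurable_gaussianPDFReal 0 1).real_toNNReal)]
  have : (fun x => ((gaussianPDFReal 0 1 x).toNNReal : ℝ≥0) • rexp (x^2/4))
      = fun x => (√(2*π))⁻¹ * rexp (-(1/4) * x^2) := by
    ext x
    rw [NNReal.smul_def, Real.coe_toNNReal _ (gaussianPDFReal_nonneg 0 1 x), gauss_pdf_eq,
      smul_eq_mul, mul_assoc, ← Real.exp_add]
    ring_nf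
  rw [this]
  exact (integrable_exp_neg_mul_sq (by norm_num)).const_mul _

lemma int_exp_sq_quarter_le : ∫ x, rexp (x^2/4) ∂(gaussianReal 0 1) ≤ 3/2 := by
  rw [gauss_int]
  have : (fun x => gaussianPDFReal 0 1 x * rexp (x^2/4))
      = fun x => (√(2*π))⁻¹ * rexp (-(1/4) * x^2) := by
    ext x
    rw [gauss_pdf_eq, mul_assoc, ← Real.exp_add]; ring_nf
  rw [this, integral_const_mul, integral_gaussian]
  have h1 : √(π / (1/4)) = 2 * √π := by
    rw [show π / (1/4) = 4 * π by ring, Real.sqrt_mul (by norm_num), show √(4:ℝ) = 2 by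
      rw [show (4:ℝ) = 2^2 by norm_num, Real.sqrt_sq (by norm_num)]]
  rw [h1, Real.sqrt_mul (by norm_num) π]
  have hπ : 0 < √π := Real.sqrt_pos.mpr Real.pi_pos
  have h2 : (0:ℝ) < √2 := Real.sqrt_pos.mpr (by norm_num)
  have h3 : √2 * √2 = 2 := Real.mul_self_sqrt (by norm_num)
  have h4 : √2 ≤ 3/2 := by nlinarith
  rw [mul_inv]
  have : (√2)⁻¹ * (√π)⁻¹ * (2 * √π) = (√2)⁻¹ * 2 := by field_simp
  rw [this]
  have : (√2)⁻¹ * 2 = √2 := by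
    rw [inv_mul_eq_div, div_eq_iff h2.ne', h3]
  rw [this]; exact h4



lemma ptwise_bd (t : ℝ) (x : ℝ) : max (x^2 - t) 0 ≤ 4 * rexp (-t/4) * rexp (x^2/4) := by
  have h3 : x^2 - t ≤ 4 * rexp ((x^2-t)/4) := by
    have := Real.add_one_le_exp ((x^2-t)/4)
    nlinarith [Real.exp_nonneg ((x^2-t)/4)]
  have key : 4 * rexp (-t/4) * rexp (x^2/4) = 4 * rexp ((x^2-t)/4) := by
    rw [mul_assoc, ← Real.exp_add]; ring_nf
  rw [key, max_le_iff]
  exact ⟨h3, by positivity⟩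

lemma integrable_relu_sq (t : ℝ) :
    Integrable (fun x => max (x^2 - t) 0) (gaussianReal 0 1) := by
  apply Integrable.mono' ((integrable_exp_sq_quarter.const_mul (4 * rexp (-t/4))))
  · exact (Continuous.max (by continuity) continuous_const).aestronglyMeasurable
  · refine Filter.Eventually.of_forall fun x => ?_
    rw [Real.norm_eq_abs, abs_of_nonneg (le_max_right _ _)]
    calc max (x^2 - t) 0 ≤ 4 * rexp (-t/4) * rexp (x^2/4) := ptwise_bd t x
      _ = 4 * rexp (-t/4) * rexp (x^2/4) := rfl

lemma int_relu_sq_le (t : ℝ) :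
    ∫ x, max (x^2 - t) 0 ∂(gaussianReal 0 1) ≤ 6 * rexp (-t/4) := by
  calc ∫ x, max (x^2 - t) 0 ∂(gaussianReal 0 1)
      ≤ ∫ x, 4 * rexp (-t/4) * rexp (x^2/4) ∂(gaussianReal 0 1) := by
        apply integral_mono (integrable_relu_sq t)
          (integrable_exp_sq_quarter.const_mul _) (ptwise_bd t)
    _ = 4 * rexp (-t/4) * ∫ x, rexp (x^2/4) ∂(gaussianReal 0 1) := by
        rw [integral_const_mul]
    _ ≤ 4 * rexp (-t/4) * (3/2) := by
        apply mul_le_mul_of_nonneg_left int_exp_sq_quarter_le (by positivity)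
    _ = 6 * rexp (-t/4) := by ring

lemma sq_sum_le (n m : ℕ) (t : ℝ) (ht : 0 ≤ t) (g : Fin n → ℝ)
    (x : EuclideanSpace ℝ (Fin n)) (hx : x ∈ sparseSphere n m) :
    (∑ i, g i * x i)^2 ≤ (m : ℝ) * t + ∑ i, max ((g i)^2 - t) 0 := by
  obtain ⟨hs, hc⟩ := hx
  set A := Finset.univ.filter fun i : Fin n => x i ≠ 0 with hA
  have hsum : ∑ i, g i * x i = ∑ i ∈ A, g i * x i := by
    refine (Finset.sum_filter_of_ne fun i _ h => ?_).symm
    intro hxi; exact h (by rw [hxi, mul_zero])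
  have hnorm : ∑ i ∈ A, (x i)^2 ≤ 1 := by
    have h1 : ‖x‖ = 1 := by simpa using mem_sphere_zero_iff_norm.mp hs
    have h2 : ∑ i, (x i)^2 = 1 := by
      have := EuclideanSpace.norm_eq x
      rw [h1] at this
      have h3 : ∑ i, ‖x i‖^2 = 1 := by
        have h0 : (0:ℝ) ≤ ∑ i, ‖x i‖^2 := Finset.sum_nonneg fun i _ => sq_nonneg _
        nlinarith [Real.sq_sqrt h0, this]
      simpa [Real.norm_eq_abs, sq_abs] using h3
    rw [← h2]
    exact Finset.sum_le_sum_of_subset_of_nonneg (Finset.filter_subset _ _)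
      (fun i _ _ => sq_nonneg _)
  have cs := Finset.sum_mul_sq_le_sq_mul_sq A g (fun i => x i)
  have hg : ∑ i ∈ A, (g i)^2 ≤ (m : ℝ) * t + ∑ i, max ((g i)^2 - t) 0 := by
    calc ∑ i ∈ A, (g i)^2 ≤ ∑ i ∈ A, (t + max ((g i)^2 - t) 0) := by
          refine Finset.sum_le_sum fun i _ => ?_
          have := le_max_left ((g i)^2 - t) 0
          linarith
      _ = A.card * t + ∑ i ∈ A, max ((g i)^2 - t) 0 := by
          rw [Finset.sum_add_distrib, Finset.sum_const, nsmul_eq_mul]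
      _ ≤ (m : ℝ) * t + ∑ i, max ((g i)^2 - t) 0 := by
          have hc' : (A.card : ℝ) ≤ (m : ℝ) := by exact_mod_cast hc
          have hsub' : ∑ i ∈ A, max ((g i)^2 - t) 0 ≤ ∑ i, max ((g i)^2 - t) 0 :=
            Finset.sum_le_sum_of_subset_of_nonneg (Finset.filter_subset _ _)
              (fun i _ _ => le_max_right _ _)
          have := mul_le_mul_of_nonneg_right hc' ht
          linarith
  have hgA : (0:ℝ) ≤ ∑ i ∈ A, (g i)^2 := Finset.sum_nonneg fun i _ => sq_nonneg _
  rw [hsum]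
  nlinarith [cs, hnorm, hg, hgA]

lemma sup_bd (n m : ℕ) (t : ℝ) (ht : 0 ≤ t) (g : Fin n → ℝ) :
    (⨆ x ∈ convexHull ℝ (sparseSphere n m), |∑ i, g i * x i|) ≤
      Real.sqrt ((m : ℝ) * t + ∑ i, max ((g i)^2 - t) 0) := by
  set B := Real.sqrt ((m : ℝ) * t + ∑ i, max ((g i)^2 - t) 0) with hB
  have hB0 : 0 ≤ B := Real.sqrt_nonneg _
  have hsub : convexHull ℝ (sparseSphere n m) ⊆
      {y : EuclideanSpace ℝ (Fin n) | |∑ i, g i * y i| ≤ B} := by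
    apply convexHull_min
    · intro x hx
      exact Real.abs_le_sqrt (sq_sum_le n m t ht g x hx)
    · intro y hy z hz a b ha hb hab
      simp only [mem_setOf_eq] at hy hz ⊢
      have : ∑ i, g i * (a • y + b • z) i = a * (∑ i, g i * y i) + b * (∑ i, g i * z i) := by
        simp only [PiLp.add_apply, PiLp.smul_apply, smul_eq_mul, Finset.mul_sum]
        rw [← Finset.sum_add_distrib]
        congr 1; ext i; ring
      rw [this]
      calc |a * (∑ i, g i * y i) + b * (∑ i, g i * z i)|
          ≤ a * |∑ i, g i * y i| + b * |∑ i, g i * z i| := by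
            calc _ ≤ |a * (∑ i, g i * y i)| + |b * (∑ i, g i * z i)| := abs_add_le _ _
              _ = a * |∑ i, g i * y i| + b * |∑ i, g i * z i| := by
                rw [abs_mul, abs_mul, abs_of_nonneg ha, abs_of_nonneg hb]
        _ ≤ a * B + b * B := by gcongr
        _ = B := by rw [← add_mul, hab, one_mul]
  refine Real.iSup_le (fun x => Real.iSup_le (fun hx => hsub hx) hB0) hB0


lemma pi_map_eval (n : ℕ) (i : Fin n) :
    (Measure.pi fun _ : Fin n => gaussianReal 0 1).map (Function.eval i) = gaussianReal 0 1 := by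
  ext s hs
  rw [Measure.map_apply (measurable_pi_apply i) hs, Set.eval_preimage, Measure.pi_pi]
  rw [Finset.prod_eq_single i (fun j _ hj => by simp [Function.update_of_ne hj]) (by simp)]
  simp

lemma comp_integrable (n : ℕ) (i : Fin n) (f : ℝ → ℝ) (hm : Continuous f)
    (hf : Integrable f (gaussianReal 0 1)) :
    Integrable (fun g : Fin n → ℝ => f (g i)) (Measure.pi fun _ : Fin n => gaussianReal 0 1) := by
  have := (integrable_map_measure (μ := Measure.pi fun _ : Fin n => gaussianReal 0 1)
    (f := Function.eval i) (g := f) ?_ (measurable_pi_apply i).aemeasurable).mp ?_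
  · exact this
  · rw [pi_map_eval]; exact hm.aestronglyMeasurable
  · rw [pi_map_eval]; exact hf

lemma comp_integral (n : ℕ) (i : Fin n) (f : ℝ → ℝ) (hm : Continuous f) :
    ∫ g : Fin n → ℝ, f (g i) ∂(Measure.pi fun _ : Fin n => gaussianReal 0 1)
      = ∫ x, f x ∂(gaussianReal 0 1) := by
  rw [← pi_map_eval n i, integral_map (measurable_pi_apply i).aemeasurable]
  rw [pi_map_eval]; exact hm.aestronglyMeasurable

end Aux

/-- Lemma 4.3: `ℓ_*(conv U_m) ≤ c √(m log(c n / m))`. -/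
theorem statement14 :
    ∃ c > (0 : ℝ), ∀ n m : ℕ, 1 ≤ m → m ≤ n →
      ellStar n (convexHull ℝ (sparseSphere n m)) ≤
        c * Real.sqrt (m * Real.log (c * n / m)) := by
  refine ⟨3, by norm_num, fun n m hm hmn => ?_⟩
  set π' : Measure (Fin n → ℝ) := Measure.pi fun _ => gaussianReal 0 1 with hπ'
  have : IsProbabilityMeasure π' := by infer_instance
  have hm0 : (0:ℝ) < m := by exact_mod_cast hm
  have hn0 : (0:ℝ) < n := lt_of_lt_of_le hm0 (by exact_mod_cast hmn)
  have hnm : (1:ℝ) ≤ (n:ℝ)/(m:ℝ) := (one_le_div hm0).mpr (by exact_mod_cast hmn)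
  set L : ℝ := Real.log (3 * n / m) with hL
  have hratio : (3:ℝ) ≤ 3 * n / m := by
    rw [mul_div_assoc]; nlinarith
  have hL1 : 1 ≤ L := by
    rw [hL, ← Real.log_exp 1]
    apply Real.log_le_log (Real.exp_pos 1)
    calc rexp 1 ≤ 3 := by
          have := Real.exp_one_lt_d9; linarith
      _ ≤ 3 * n / m := hratio
  have hL0 : 0 < L := lt_of_lt_of_le one_pos hL1
  set t : ℝ := 4 * L with hts
  have ht0 : 0 ≤ t := by positivity
  set M : ℝ := 6 * m * L with hM
  have hM0 : 0 < M := by positivity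
  set f : ℝ → ℝ := fun x => max (x^2 - t) 0 with hf
  have hfc : Continuous f := (continuous_pow 2).sub continuous_const |>.max continuous_const
  set X : (Fin n → ℝ) → ℝ := fun g => (m:ℝ) * t + ∑ i, f (g i) with hX
  -- integrability of X
  have hXint : Integrable X π' := by
    apply Integrable.add (integrable_const _)
    exact integrable_finset_sum _ fun i _ =>
      comp_integrable n i f hfc (integrable_relu_sq t)
  -- integral of X
  have hXle : ∫ g, X g ∂π' ≤ M := by
    have h1 : ∫ g, X g ∂π' = (m:ℝ) * t + ∑ i : Fin n, ∫ x, f x ∂(gaussianReal 0 1) := by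
      rw [hX, integral_add (integrable_const _)
        (integrable_finset_sum _ fun i _ => comp_integrable n i f hfc (integrable_relu_sq t)),
        integral_const, integral_finset_sum _
          (fun i _ => comp_integrable n i f hfc (integrable_relu_sq t))]
      simp only [probReal_univ, smul_eq_mul, one_mul]
      congr 1
      exact Finset.sum_congr rfl fun i _ => comp_integral n i f hfc
    rw [h1, Finset.sum_const, Finset.card_univ, Fintype.card_fin, nsmul_eq_mul]
    have h2 : ∫ x, f x ∂(gaussianReal 0 1) ≤ 6 * rexp (-t/4) := int_relu_sq_le t
    have h3 : rexp (-t/4) = (m:ℝ)/(3*n) := by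
      rw [show -t/4 = -L by rw [hts]; ring, Real.exp_neg, hL,
        Real.exp_log (by positivity)]
      rw [inv_div]
    have h4 : (n:ℝ) * (6 * rexp (-t/4)) = 2 * m := by
      rw [h3]; field_simp; ring
    have h5 : (n:ℝ) * ∫ x, f x ∂(gaussianReal 0 1) ≤ 2 * m := by
      calc (n:ℝ) * ∫ x, f x ∂(gaussianReal 0 1) ≤ (n:ℝ) * (6 * rexp (-t/4)) := by
            apply mul_le_mul_of_nonneg_left h2 hn0.le
        _ = 2 * m := h4
    have : (m:ℝ) * t = 4 * m * L := by rw [hts]; ring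
    rw [this, hM]
    nlinarith
  -- pointwise bound
  have hptw : ∀ g : Fin n → ℝ,
      (⨆ x ∈ convexHull ℝ (sparseSphere n m), |∑ i, g i * x i|) ≤ (X g + M) / (2 * √M) := by
    intro g
    have hXg0 : 0 ≤ X g := by
      rw [hX]
      apply add_nonneg (by positivity)
      exact Finset.sum_nonneg fun i _ => le_max_right _ _
    refine le_trans (sup_bd n m t ht0 g) ?_
    have hsM : (0:ℝ) < √M := Real.sqrt_pos.mpr hM0
    rw [le_div_iff₀ (by positivity)]
    nlinarith [Real.sq_sqrt hXg0, Real.sq_sqrt hM0.le, Real.sqrt_nonneg (X g),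
      sq_nonneg (√(X g) - √M)]
  -- integrate
  have hmain : ellStar n (convexHull ℝ (sparseSphere n m)) ≤ √M := by
    have hint : ellStar n (convexHull ℝ (sparseSphere n m)) ≤ ∫ g, (X g + M) / (2 * √M) ∂π' := by
      apply integral_mono_of_nonneg
      · refine Filter.Eventually.of_forall fun g => ?_
        exact Real.iSup_nonneg fun x => Real.iSup_nonneg fun _ => abs_nonneg _
      · exact (hXint.add (integrable_const M)).div_const _
      · exact Filter.Eventually.of_forall hptw
    refine hint.trans ?_
    rw [integral_div, integral_add hXint (integrable_const M), integral_const]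
    simp only [probReal_univ, smul_eq_mul, one_mul]
    have hsM : (0:ℝ) < √M := Real.sqrt_pos.mpr hM0
    rw [div_le_iff₀ (by positivity)]
    have : √M * (2 * √M) = 2 * M := by
      rw [show √M * (2 * √M) = 2 * (√M * √M) by ring, Real.mul_self_sqrt hM0.le]
    rw [this]
    linarith
  refine hmain.trans ?_
  have h9 : √(9 * ((m:ℝ) * L)) = 3 * √((m:ℝ) * L) := by
    rw [Real.sqrt_mul (by norm_num : (0:ℝ) ≤ 9), show √(9:ℝ) = 3 by
      rw [show (9:ℝ) = 3^2 by norm_num, Real.sqrt_sq (by norm_num)]]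
  rw [← h9]
  apply Real.sqrt_le_sqrt
  rw [hM]; nlinarith
end
end
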